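/- For any L ⊂ C₀(S)×C(S), the set of solutions of the martingale local problem is unchanged by taking the closed linear span: M( closure in C₀(S)×C(S) of the linear span of L ) = M(L). -/

import Mathlib

open MeasureTheory Filter Topology Set
open scoped ENNReal NNReal ZeroAtInfty

noncomputable section

namespace LocFeller

attribute [local instance] Classical.propDecidable

variable (S : Type) [TopologicalSpace S] [T2Space S] [LocallyCompactSpace S]
  [SecondCountableTopology S]

/-- The compactified space `S^Δ`. -/
abbrev SD := OnePoint S

instance : MeasurableSpace (SD S) := borel _
instance : BorelSpace (SD S) := ⟨rfl⟩

/-- The canonical uniformity of the compact Hausdorff space `S^Δ`. -/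
def unifSD : UniformSpace (SD S) := uniformSpaceOfCompactR1

variable {S}

/-- A subset of `S^Δ` is relatively compact in `S` if it is contained in (the image in `S^Δ` of)
a compact subset of `S`. -/
def RelCpt (A : Set (SD S)) : Prop :=
  ∃ K : Set S, IsCompact K ∧ A ⊆ (fun a : S => (a : SD S)) '' K

/-- The explosion time `ξ(x)` of a path. -/
def xi (x : ℝ≥0 → SD S) : ℝ≥0∞ :=
  sInf {t : ℝ≥0∞ | ∃ t' : ℝ≥0, t = (t' : ℝ≥0∞) ∧ ¬ RelCpt {y | ∃ s ≤ t', x s = y}}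

/-- The set of exploding cadlag paths `D_loc(S)`. -/
def DlocSet : Set (ℝ≥0 → SD S) :=
  {x | (∀ t : ℝ≥0, xi x ≤ (t : ℝ≥0∞) → x t = OnePoint.infty) ∧
       (∀ t : ℝ≥0, Tendsto x (𝓝[>] t) (𝓝 (x t))) ∧
       (∀ t : ℝ≥0, 0 < t → RelCpt {y | ∃ s < t, x s = y} →
          ∃ l : SD S, Tendsto x (𝓝[<] t) (𝓝 l))}

variable (S) in
/-- The space `D_loc(S)` of exploding cadlag paths. -/
def Dloc : Type := {x : ℝ≥0 → SD S // x ∈ DlocSet}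

/-- The canonical process / evaluation. -/
def ev (x : Dloc S) (t : ℝ≥0) : SD S := x.1 t

variable (S) in
/-- The set of everywhere cadlag paths, underlying `D(S^Δ)`. -/
def DDSet : Set (ℝ≥0 → SD S) :=
  {x | (∀ t : ℝ≥0, Tendsto x (𝓝[>] t) (𝓝 (x t))) ∧
       (∀ t : ℝ≥0, 0 < t → ∃ l : SD S, Tendsto x (𝓝[<] t) (𝓝 l))}

variable (S) in
/-- The space `D(S^Δ)` of cadlag paths with values in `S^Δ`. -/
def DD : Type := {x : ℝ≥0 → SD S // x ∈ DDSet S}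

/-- Convergence for the local Skorokhod topology. -/
def LSConv (xk : ℕ → Dloc S) (x : Dloc S) : Prop :=
  ∃ lam : ℕ → ℝ≥0 → ℝ≥0,
    (∀ k, StrictMono (lam k) ∧ Function.Surjective (lam k)) ∧
    ∀ t : ℝ≥0, RelCpt {y | ∃ s < t, x.1 s = y} →
      (∀ V ∈ @uniformity (SD S) (unifSD S), ∀ᶠ k in atTop, ∀ s ≤ t, (x.1 s, (xk k).1 (lam k s)) ∈ V) ∧
      (∀ ε : ℝ≥0, 0 < ε → ∀ᶠ k in atTop, ∀ s ≤ t, dist (lam k s) s ≤ (ε : ℝ))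

/-- Convergence for the global Skorokhod topology. -/
def GSConv (xk : ℕ → DD S) (x : DD S) : Prop :=
  ∃ lam : ℕ → ℝ≥0 → ℝ≥0,
    (∀ k, StrictMono (lam k) ∧ Function.Surjective (lam k)) ∧
    ∀ t : ℝ≥0,
      (∀ V ∈ @uniformity (SD S) (unifSD S), ∀ᶠ k in atTop, ∀ s ≤ t, (x.1 s, (xk k).1 (lam k s)) ∈ V) ∧
      (∀ ε : ℝ≥0, 0 < ε → ∀ᶠ k in atTop, ∀ s ≤ t, dist (lam k s) s ≤ (ε : ℝ))

/-- The local Skorokhod topology on `D_loc(S)`, described through its convergent sequences. -/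
instance : TopologicalSpace (Dloc S) where
  IsOpen U := ∀ x ∈ U, ∀ xk : ℕ → Dloc S, LSConv xk x → ∀ᶠ k in atTop, xk k ∈ U
  isOpen_univ := by intro x _ xk _; simp
  isOpen_inter := by
    intro U V hU hV x hx xk hconv
    exact (hU x hx.1 xk hconv).and (hV x hx.2 xk hconv)
  isOpen_sUnion := by
    intro 𝒮 h x hx xk hconv
    obtain ⟨U, hU, hxU⟩ := hx
    exact (h U hU x hxU xk hconv).mono fun k hk => ⟨U, hU, hk⟩

/-- The global Skorokhod topology on `D(S^Δ)`. -/
instance : TopologicalSpace (DD S) where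
  IsOpen U := ∀ x ∈ U, ∀ xk : ℕ → DD S, GSConv xk x → ∀ᶠ k in atTop, xk k ∈ U
  isOpen_univ := by intro x _ xk _; simp
  isOpen_inter := by
    intro U V hU hV x hx xk hconv
    exact (hU x hx.1 xk hconv).and (hV x hx.2 xk hconv)
  isOpen_sUnion := by
    intro 𝒮 h x hx xk hconv
    obtain ⟨U, hU, hxU⟩ := hx
    exact (h U hU x hxU xk hconv).mono fun k hk => ⟨U, hU, hk⟩

/-- The σ-algebra `F := σ(X_s, 0 ≤ s < ∞)` on `D_loc(S)`. -/
instance : MeasurableSpace (Dloc S) :=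
  ⨆ t : ℝ≥0, MeasurableSpace.comap (fun x : Dloc S => x.1 t) inferInstance

/-- The σ-algebra `F := σ(X_s, 0 ≤ s < ∞)` on `D(S^Δ)`. -/
instance : MeasurableSpace (DD S) :=
  ⨆ t : ℝ≥0, MeasurableSpace.comap (fun x : DD S => x.1 t) inferInstance

variable (S) in
/-- The canonical filtration `F_t := σ(X_s, 0 ≤ s ≤ t)` on `D_loc(S)`. -/
def canFilt : Filtration ℝ≥0 (inferInstance : MeasurableSpace (Dloc S)) where
  seq t := ⨆ s : {s : ℝ≥0 // s ≤ t}, MeasurableSpace.comap (fun x : Dloc S => x.1 s.1) inferInstance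
  mono' s t hst := iSup_le fun u => le_iSup_of_le ⟨u.1, u.2.trans hst⟩ le_rfl
  le' t := iSup_le fun u =>
    le_iSup (fun r : ℝ≥0 => MeasurableSpace.comap (fun x : Dloc S => x.1 r) inferInstance) u.1

variable (S) in
/-- The canonical filtration on `D(S^Δ)`. -/
def canFiltDD : Filtration ℝ≥0 (inferInstance : MeasurableSpace (DD S)) where
  seq t := ⨆ s : {s : ℝ≥0 // s ≤ t}, MeasurableSpace.comap (fun x : DD S => x.1 s.1) inferInstance
  mono' s t hst := iSup_le fun u => le_iSup_of_le ⟨u.1, u.2.trans hst⟩ le_rfl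
  le' t := iSup_le fun u =>
    le_iSup (fun r : ℝ≥0 => MeasurableSpace.comap (fun x : DD S => x.1 r) inferInstance) u.1

variable (S) in
/-- The right-continuous filtration `F_{t+}`. -/
def FPlus (t : ℝ≥0) : MeasurableSpace (Dloc S) :=
  ⨅ s : {s : ℝ≥0 // t < s}, canFilt S s.1

/-- `τ` is an `(F_{t+})_t`-stopping time. -/
def IsStopT (τ : Dloc S → ℝ≥0∞) : Prop :=
  ∀ t : ℝ≥0, MeasurableSet[FPlus S t] {x | τ x ≤ (t : ℝ≥0∞)}


/-- Extension of a function on `S` to `S^Δ` by the value `0` at `Δ`. -/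
def gop (g : S → ℝ) : SD S → ℝ := fun a => OnePoint.elim a 0 g

/-- Evaluation of a path at an extended time, with the convention `X_∞ := Δ`. -/
def evalAtE (x : ℝ≥0 → SD S) (r : ℝ≥0∞) : SD S :=
  if r = ∞ then OnePoint.infty else x r.toNNReal

/-- The image of `U ⊆ S` in `S^Δ`. -/
def emb (U : Set S) : Set (SD S) := (fun a : S => (a : SD S)) '' U

/-- The exit time `τ^U := inf{t ≥ 0 | X_{t−} ∉ U or X_t ∉ U} ∧ ξ`. -/
def tauU (U : Set S) (x : ℝ≥0 → SD S) : ℝ≥0∞ :=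
  min (xi x)
    (sInf {t : ℝ≥0∞ | ∃ t' : ℝ≥0, t = (t' : ℝ≥0∞) ∧
      (Function.leftLim x t' ∉ emb U ∨ x t' ∉ emb U)})

/-- The process `t ↦ f(X_{t∧τ^U}) − ∫_0^{t∧τ^U} g(X_s) ds`. -/
def martProc (f : S → ℝ) (g : S → ℝ) (U : Set S) (t : ℝ≥0) (x : Dloc S) : ℝ :=
  gop f (evalAtE x.1 (min (t : ℝ≥0∞) (tauU U x.1))) -
    ∫ s in Set.Ioc (0 : ℝ) (min (t : ℝ≥0∞) (tauU U x.1)).toReal,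
      gop g (x.1 (Real.toNNReal s))

variable (S) in
/-- `U` is an open subset compactly embedded in `S`. -/
def OpenCpt (U : Set S) : Prop := IsOpen U ∧ IsCompact (closure U)

/-- The set `M(L)` of solutions of the martingale local problem associated to
`L ⊆ C₀(S) × C(S)`. -/
def MartSet (L : Set (C₀(S, ℝ) × C(S, ℝ))) : Set (Measure (Dloc S)) :=
  {P | IsProbabilityMeasure P ∧ ∀ fg ∈ L, ∀ U : Set S, OpenCpt S U →
      Martingale (fun t => martProc (fg.1 : S → ℝ) (fg.2 : S → ℝ) U t) (canFilt S) P}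

/-- The domain `D(L)` of `L ⊆ C₀(S) × C(S)`. -/
def dom (L : Set (C₀(S, ℝ) × C(S, ℝ))) : Set C₀(S, ℝ) := Prod.fst '' L

/-- The constant path equal to `Δ`. -/
def deltaPath : Dloc S := by
  refine ⟨fun _ => OnePoint.infty, ?_, fun t => tendsto_const_nhds, fun t _ h => ?_⟩
  · intro t _; rfl
  · exact ⟨OnePoint.infty, tendsto_const_nhds⟩

/-- Extension of a family `(P_a)_{a ∈ S}` to `S^Δ`, mapping `Δ` to the law `P_Δ` of the
constant path at `Δ` (the unique law such that `P_Δ(ξ = 0) = 1`). -/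
def PextF (P : S → Measure (Dloc S)) : SD S → Measure (Dloc S) :=
  fun a => OnePoint.elim a (Measure.dirac deltaPath) P

/-- `P_μ := ∫ P_a μ(da)` for a measure `μ` on `S^Δ`. -/
def Pmu (P : S → Measure (Dloc S)) (μ : Measure (SD S)) : Measure (Dloc S) :=
  μ.bind (PextF P)

/-- The path `(X_{t₀+t})_{t ≥ 0}` (shift of a path). -/
def shiftD (t0 : ℝ≥0) (x : Dloc S) : Dloc S :=
  if h : (fun t => x.1 (t0 + t)) ∈ DlocSet then ⟨_, h⟩ else x

/-- The path `(X_{τ+t})_{t ≥ 0}` for a random time `τ`, with the convention `X_∞ := Δ`. -/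
def shiftTauD (τ : Dloc S → ℝ≥0∞) (x : Dloc S) : Dloc S :=
  if h : (fun t : ℝ≥0 => evalAtE x.1 (τ x + (t : ℝ≥0∞))) ∈ DlocSet then ⟨_, h⟩ else x

/-- The path stopped at `τ^U`, i.e. `X^{τ^U}`. -/
def stopD (U : Set S) (x : Dloc S) : Dloc S :=
  if h : (fun t : ℝ≥0 => evalAtE x.1 (min (t : ℝ≥0∞) (tauU U x.1))) ∈ DlocSet then ⟨_, h⟩ else x

/-- A Markov family of probability measures on `D_loc(S)`. -/
structure IsMarkovFamily (P : S → Measure (Dloc S)) : Prop where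
  meas : ∀ B : Set (Dloc S), MeasurableSet B →
    @Measurable S ℝ≥0∞ (borel S) inferInstance (fun a => P a B)
  prob : ∀ a, IsProbabilityMeasure (P a)
  init : ∀ a : S, P a {x | x.1 0 = (a : SD S)} = 1
  markov : ∀ B : Set (Dloc S), MeasurableSet B → ∀ a : S, ∀ t0 : ℝ≥0,
    (P a)[Set.indicator (shiftD t0 ⁻¹' B) (fun _ => (1 : ℝ)) | canFilt S t0]
      =ᵐ[P a] fun x => (PextF P (x.1 t0) B).toReal

/-- A Feller family of probability measures on `D_loc(S)`. -/
def IsFellerFamily (P : S → Measure (Dloc S)) : Prop :=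
  IsMarkovFamily P ∧ ∀ f : C₀(S, ℝ), ∀ t : ℝ≥0,
    Continuous (fun a : S => ∫ x, gop (f : S → ℝ) (x.1 t) ∂(P a)) ∧
    Tendsto (fun a : S => ∫ x, gop (f : S → ℝ) (x.1 t) ∂(P a)) (cocompact S) (𝓝 0)

/-- A locally Feller family: a family which is, for some `L ⊆ C₀(S) × C(S)` with dense
domain, the unique solution of the martingale local problem associated to `L`. -/
def IsLocallyFellerFamily (P : S → Measure (Dloc S)) : Prop :=
  ∃ L : Set (C₀(S, ℝ) × C(S, ℝ)), Dense (dom L) ∧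
    ∀ a : S, ∀ Q : Measure (Dloc S),
      (Q ∈ MartSet L ∧ Q {x | x.1 0 = (a : SD S)} = 1) ↔ Q = P a

variable (S) in
/-- The weak topology on measures on `D_loc(S)` (for the local Skorokhod topology). -/
def weakTop : TopologicalSpace (Measure (Dloc S)) :=
  ⨅ f : {f : Dloc S → ℝ // Continuous f ∧ ∃ C : ℝ, ∀ x, |f x| ≤ C},
    TopologicalSpace.induced (fun P : Measure (Dloc S) => ∫ x, f.1 x ∂P) inferInstance

variable (S) in
/-- The weak topology on measures on `D(S^Δ)` (for the global Skorokhod topology). -/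
def weakTopDD : TopologicalSpace (Measure (DD S)) :=
  ⨅ f : {f : DD S → ℝ // Continuous f ∧ ∃ C : ℝ, ∀ x, |f x| ≤ C},
    TopologicalSpace.induced (fun P : Measure (DD S) => ∫ x, f.1 x ∂P) inferInstance

/-- Weak convergence of a sequence of measures on `D_loc(S)`, for the local Skorokhod
topology. -/
def WeakConv (P : ℕ → Measure (Dloc S)) (Q : Measure (Dloc S)) : Prop :=
  ∀ f : Dloc S → ℝ, Continuous f → (∃ C : ℝ, ∀ x, |f x| ≤ C) →
    Tendsto (fun n => ∫ x, f x ∂(P n)) atTop (𝓝 (∫ x, f x ∂Q))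


/-! ### Time change -/

/-- `τ^{g≠0}(x) := inf{t ≥ 0 | g(x_{t−}) ∧ g(x_t) = 0} ∧ ξ(x)`. -/
def taug0 (g : S → ℝ) (x : ℝ≥0 → SD S) : ℝ≥0∞ :=
  min (xi x)
    (sInf {t : ℝ≥0∞ | ∃ t' : ℝ≥0, t = (t' : ℝ≥0∞) ∧
      min (gop g (Function.leftLim x t')) (gop g (x t')) = 0})

/-- The additive functional `s ↦ ∫_0^s du / g(x_u)`. -/
def Ag (g : S → ℝ) (x : ℝ≥0 → SD S) (s : ℝ≥0) : ℝ≥0∞ :=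
  ∫⁻ u in Set.Ioc (0 : ℝ) (s : ℝ), ENNReal.ofReal (1 / gop g (x (Real.toNNReal u)))

/-- The time change `τ_t^g(x) := inf{s ≥ 0 | s ≥ τ^{g≠0} or ∫_0^s du/g(x_u) ≥ t}`. -/
def taug (g : S → ℝ) (x : ℝ≥0 → SD S) (t : ℝ≥0) : ℝ≥0∞ :=
  sInf {s : ℝ≥0∞ | taug0 g x ≤ s ∨ ∃ s' : ℝ≥0, s = (s' : ℝ≥0∞) ∧ (t : ℝ≥0∞) ≤ Ag g x s'}

/-- Left limit of a path at an extended time (limit at infinity if the time is `∞`). -/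
def leftLimE (x : ℝ≥0 → SD S) (τ : ℝ≥0∞) : SD S :=
  if τ = ∞ then limUnder atTop x else Function.leftLim x τ.toNNReal

/-- Existence of the left limit of a path at an extended time. -/
def ExLeftLimE (x : ℝ≥0 → SD S) (τ : ℝ≥0∞) : Prop :=
  if τ = ∞ then ∃ l : SD S, Tendsto x atTop (𝓝 l)
  else τ = 0 ∨ ∃ l : SD S, Tendsto x (𝓝[<] τ.toNNReal) (𝓝 l)

/-- The time-changed path `g·x`. -/
def tcPath (g : S → ℝ) (x : ℝ≥0 → SD S) : ℝ≥0 → SD S := fun t =>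
  if taug g x t = taug0 g x ∧ ExLeftLimE x (taug0 g x) ∧
      leftLimE x (taug0 g x) ≠ OnePoint.infty ∧ gop g (leftLimE x (taug0 g x)) = 0
  then leftLimE x (taug0 g x)
  else evalAtE x (taug g x t)

/-- The time-changed path `g·x`, as an element of `D_loc(S)`. -/
def tcD (g : S → ℝ) (x : Dloc S) : Dloc S :=
  if h : tcPath g x.1 ∈ DlocSet then ⟨_, h⟩ else x

/-- The time-changed probability `g·P`: the pushforward of `P` by `x ↦ g·x`. -/
def tcM (g : S → ℝ) (P : Measure (Dloc S)) : Measure (Dloc S) :=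
  Measure.map (tcD g) P

/-! ### Stopping times, strong Markov, quasi-continuity -/

/-- The σ-algebra `F_{τ+}` associated to a stopping time `τ`. -/
def sigmaTauPlus (τ : Dloc S → ℝ≥0∞) : MeasurableSpace (Dloc S) :=
  MeasurableSpace.generateFrom
    {A | MeasurableSet A ∧ ∀ t : ℝ≥0, MeasurableSet[FPlus S t] (A ∩ {x | τ x ≤ (t : ℝ≥0∞)})}

/-- `P` is `(F_{t+})_t`-quasi-continuous: for `(F_{t+})_t`-stopping times `τ, τ₁, τ₂, …`,
`X_{τ_n} → X_τ` `P`-a.s. on `{τ_n → τ < ∞}`, with the convention `X_∞ := Δ`. -/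
def QuasiCts (P : Measure (Dloc S)) : Prop :=
  ∀ τ : Dloc S → ℝ≥0∞, ∀ τn : ℕ → Dloc S → ℝ≥0∞,
    IsStopT τ → (∀ n, IsStopT (τn n)) →
    ∀ᵐ x ∂P, (Tendsto (fun n => τn n x) atTop (𝓝 (τ x)) ∧ τ x < ∞) →
      Tendsto (fun n => evalAtE x.1 (τn n x)) atTop (𝓝 (evalAtE x.1 (τ x)))

/-- The family `(P_a)_a` is `(F_{t+})_t`-strong Markov. -/
def IsStrongMarkov (P : S → Measure (Dloc S)) : Prop :=
  ∀ τ : Dloc S → ℝ≥0∞, IsStopT τ → ∀ B : Set (Dloc S), MeasurableSet B → ∀ a : S,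
    (P a)[Set.indicator (shiftTauD τ ⁻¹' B) (fun _ => (1 : ℝ)) | sigmaTauPlus τ]
      =ᵐ[P a] fun x => (PextF P (evalAtE x.1 (τ x)) B).toReal

/-! ### Positive maximum principle, operators -/

/-- `L ⊆ C₀(S) × C(S)` satisfies the positive maximum principle. -/
def PMP (L : Set (C₀(S, ℝ) × C(S, ℝ))) : Prop :=
  ∀ fg ∈ L, ∀ a0 : S, (∀ a : S, fg.1 a ≤ fg.1 a0) → 0 ≤ fg.1 a0 → fg.2 a0 ≤ 0

/-- `L` is a linear subspace of `C₀(S) × C(S)`. -/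
def IsLinSub (L : Set (C₀(S, ℝ) × C(S, ℝ))) : Prop :=
  (0 : C₀(S, ℝ) × C(S, ℝ)) ∈ L ∧ (∀ p ∈ L, ∀ q ∈ L, p + q ∈ L) ∧
    ∀ (c : ℝ), ∀ p ∈ L, c • p ∈ L

/-- The `C₀×C`-generator of a family `(P_a)_a`: the set of `(f,g) ∈ C₀(S) × C(S)` such that
for all `a` and all open `U ⋐ S`, `f(X_{t∧τ^U}) − ∫_0^{t∧τ^U} g(X_s) ds` is a
`P_a`-martingale. -/
def genC (P : S → Measure (Dloc S)) : Set (C₀(S, ℝ) × C(S, ℝ)) :=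
  {fg | ∀ a : S, ∀ U : Set S, OpenCpt S U →
    Martingale (fun t => martProc (fg.1 : S → ℝ) (fg.2 : S → ℝ) U t) (canFilt S) (P a)}

/-- The `C₀×C₀`-generator of a Feller family `(P_a)_a`: the pairs `(f,g) ∈ C₀(S) × C₀(S)`
with `(T_t f(a) − f(a))/t → g(a)` for every `a`, where `T_t f(a) := E_a[f(X_t)]`. -/
def genC0 (P : S → Measure (Dloc S)) : Set (C₀(S, ℝ) × C₀(S, ℝ)) :=
  {fg | ∀ a : S,
    Tendsto (fun t : ℝ≥0 => ((∫ x, gop (fg.1 : S → ℝ) (x.1 t) ∂(P a)) - fg.1 a) / (t : ℝ))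
      (𝓝[>] 0) (𝓝 (fg.2 a))}

/-! ### The compactified martingale problem -/

/-- `L^Δ := span(L ∪ {(1_{S^Δ}, 0)})`, as a set of pairs of functions on `S^Δ`. -/
def LDelta (L : Set (C₀(S, ℝ) × C₀(S, ℝ))) : Set ((SD S → ℝ) × (SD S → ℝ)) :=
  (Submodule.span ℝ
    ((fun fg : C₀(S, ℝ) × C₀(S, ℝ) => (gop (fg.1 : S → ℝ), gop (fg.2 : S → ℝ))) '' L ∪
      {((fun _ => 1), (fun _ => 0))}) : Submodule ℝ ((SD S → ℝ) × (SD S → ℝ)))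

/-- The set `M_c(L^Δ)` of solutions, supported by `S^Δ`-conservative paths, of the
martingale problem on `D(S^Δ)` associated to a set `LD` of pairs of functions on `S^Δ`. -/
def McSet (LD : Set ((SD S → ℝ) × (SD S → ℝ))) : Set (Measure (DD S)) :=
  {P | IsProbabilityMeasure P ∧ ∀ fg ∈ LD,
    Martingale
      (fun (t : ℝ≥0) (x : DD S) =>
        fg.1 (x.1 t) - ∫ s in Set.Ioc (0 : ℝ) (t : ℝ), fg.2 (x.1 (Real.toNNReal s)))
      (canFiltDD S) P}

/-- The constant path at `Δ`, as an element of `D(S^Δ)`. -/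
def deltaPathDD : DD S :=
  ⟨fun _ => OnePoint.infty, fun _ => tendsto_const_nhds,
    fun _ _ => ⟨OnePoint.infty, tendsto_const_nhds⟩⟩

/-- The canonical map from `D_loc(S)` to `D(S^Δ)` (the identity on `D_loc(S) ∩ D(S^Δ)`). -/
def toDD (x : Dloc S) : DD S :=
  if h : x.1 ∈ DDSet S then ⟨x.1, h⟩ else deltaPathDD

/-! ### Feller semigroups -/

/-- A Feller semigroup on `C₀(S)`. -/
structure IsFellerSemigroup (T : ℝ≥0 → C₀(S, ℝ) → C₀(S, ℝ)) : Prop where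
  linear : ∀ t, IsLinearMap ℝ (T t)
  id0 : ∀ f, T 0 f = f
  semigroup : ∀ s t f, T (s + t) f = T s (T t f)
  contraction : ∀ t f, ‖T t f‖ ≤ ‖f‖
  positive : ∀ t (f : C₀(S, ℝ)), (∀ a, 0 ≤ f a) → ∀ a, 0 ≤ T t f a
  strongCont : ∀ f, Tendsto (fun t : ℝ≥0 => T t f) (𝓝 0) (𝓝 f)

/-- The generator of a semigroup on `C₀(S)`: pairs `(f,g)` with
`(T_t f(a) − f(a))/t → g(a)` for every `a ∈ S`. -/
def semigroupGen (T : ℝ≥0 → C₀(S, ℝ) → C₀(S, ℝ)) : Set (C₀(S, ℝ) × C₀(S, ℝ)) :=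
  {fg | ∀ a : S,
    Tendsto (fun t : ℝ≥0 => (T t fg.1 a - fg.1 a) / (t : ℝ)) (𝓝[>] 0) (𝓝 (fg.2 a))}

/-! ### Auxiliary lemmas for Statement 1 -/

section Stmt1Aux

open TopologicalSpace

lemma gop_infty (g : S → ℝ) : gop g (OnePoint.infty) = 0 := rfl

@[simp] lemma gop_coe (g : S → ℝ) (a : S) : gop g ((a : SD S)) = g a := rfl

lemma abs_gop_sub_le' {f f' : S → ℝ} {C : ℝ} (hC : 0 ≤ C) (h : ∀ a, |f a - f' a| ≤ C)
    (y : SD S) : |gop f y - gop f' y| ≤ C := by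
  by_cases hy : y = OnePoint.infty
  · subst hy; simpa [gop_infty] using hC
  · obtain ⟨a, rfl⟩ := OnePoint.ne_infty_iff_exists.1 hy
    exact h a

lemma gop_add (f f' : S → ℝ) (y : SD S) : gop (f + f') y = gop f y + gop f' y := by
  by_cases hy : y = OnePoint.infty
  · subst hy; simp [gop_infty]
  · obtain ⟨a, rfl⟩ := OnePoint.ne_infty_iff_exists.1 hy
    simp

lemma gop_smul (c : ℝ) (f : S → ℝ) (y : SD S) : gop (c • f) y = c * gop f y := by
  by_cases hy : y = OnePoint.infty
  · subst hy; simp [gop_infty]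
  · obtain ⟨a, rfl⟩ := OnePoint.ne_infty_iff_exists.1 hy
    simp

lemma gop_zero (y : SD S) : gop (fun _ : S => (0:ℝ)) y = 0 := by
  by_cases hy : y = OnePoint.infty
  · subst hy; simp [gop_infty]
  · obtain ⟨a, rfl⟩ := OnePoint.ne_infty_iff_exists.1 hy
    simp

lemma C0_abs_le (p : C₀(S, ℝ)) (a : S) : |p a| ≤ ‖p‖ := by
  rw [← ZeroAtInftyContinuousMap.norm_toBCF_eq_norm, ← Real.norm_eq_abs]
  exact p.toBCF.norm_coe_le_norm a

/-- A composition through a right-continuous exploding path is measurable. -/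
lemma measurable_gop_comp {g : S → ℝ} (hg : Continuous g) {x : ℝ≥0 → SD S}
    (hx : x ∈ DlocSet) : Measurable fun s : ℝ≥0 => gop g (x s) := by
  classical
  set δ : ℕ → ℝ≥0 → ℝ≥0 := fun n s => ((⌊(s : ℝ) * 2 ^ n⌋₊ : ℝ≥0) + 1) / 2 ^ n with hδdef
  have hpow : ∀ n : ℕ, (0:ℝ) < 2 ^ n := fun n => by positivity
  have hδ_gt : ∀ n s, s < δ n s := by
    intro n s
    rw [← NNReal.coe_lt_coe]
    push_cast [hδdef]
    rw [lt_div_iff₀ (hpow n)]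
    exact Nat.lt_floor_add_one ((s:ℝ) * 2 ^ n)
  have hδ_le : ∀ n s, ((δ n s : ℝ≥0) : ℝ) ≤ (s:ℝ) + 1 / 2 ^ n := by
    intro n s
    push_cast [hδdef]
    rw [div_le_iff₀ (hpow n), add_mul, one_div, inv_mul_cancel₀ (hpow n).ne']
    have := Nat.floor_le (by positivity : (0:ℝ) ≤ (s:ℝ) * 2 ^ n)
    linarith
  have hδ_tendsto : ∀ s, Tendsto (fun n => δ n s) atTop (𝓝[>] s) := by
    intro s
    rw [tendsto_nhdsWithin_iff]
    refine ⟨?_, Eventually.of_forall fun n => hδ_gt n s⟩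
    rw [← NNReal.tendsto_coe]
    have hup : Tendsto (fun n : ℕ => (s:ℝ) + 1 / 2 ^ n) atTop (𝓝 ((s:ℝ) + 0)) := by
      refine tendsto_const_nhds.add ?_
      simp only [one_div, ← inv_pow]
      exact tendsto_pow_atTop_nhds_zero_of_lt_one (by norm_num) (by norm_num)
    rw [add_zero] at hup
    exact tendsto_of_tendsto_of_tendsto_of_le_of_le tendsto_const_nhds hup
      (fun n => (NNReal.coe_le_coe.2 (hδ_gt n s).le)) (fun n => hδ_le n s)
  have hδ_meas : ∀ n, Measurable (δ n) := by
    intro n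
    exact (measurable_from_nat (f := fun k : ℕ => ((k:ℝ≥0) + 1) / 2 ^ n)).comp
      (Nat.measurable_floor.comp (measurable_coe_nnreal_real.mul measurable_const))
  have hδ_range : ∀ n, (Set.range (δ n)).Countable := by
    intro n
    refine Set.Countable.mono ?_ (Set.countable_range fun k : ℕ => ((k:ℝ≥0) + 1) / 2 ^ n)
    rintro _ ⟨s, rfl⟩; exact ⟨⌊(s:ℝ) * 2 ^ n⌋₊, rfl⟩
  have hcomp : ∀ n, Measurable fun s => gop g (x (δ n s)) := by
    intro n
    have h1 : Measurable (Set.rangeFactorization (δ n)) := (hδ_meas n).subtype_mk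
    haveI : Countable (Set.range (δ n)) := (hδ_range n).to_subtype
    exact (measurable_of_countable fun y : Set.range (δ n) => gop g (x y.1)).comp h1
  apply measurable_of_tendsto_metrizable (fun n => hcomp n)
  rw [tendsto_pi_nhds]
  intro s
  have hxs : Tendsto (fun n => x (δ n s)) atTop (𝓝 (x s)) :=
    (hx.2.1 s).comp (hδ_tendsto s)
  by_cases hinf : x s = OnePoint.infty
  · have hxi : xi x ≤ (s : ℝ≥0∞) := by
      apply sInf_le
      refine ⟨s, rfl, ?_⟩
      rintro ⟨K, hK, hsub⟩
      obtain ⟨a, -, ha⟩ := hsub ⟨s, le_rfl, rfl⟩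
      rw [hinf] at ha
      exact OnePoint.coe_ne_infty a ha
    have hall : ∀ n, x (δ n s) = OnePoint.infty := fun n =>
      hx.1 (δ n s) (hxi.trans (by exact_mod_cast (hδ_gt n s).le))
    simp only [hall, hinf, gop_infty]
    exact tendsto_const_nhds
  · obtain ⟨a, ha⟩ := OnePoint.ne_infty_iff_exists.1 hinf
    have hca : ContinuousAt (gop g) ((a : SD S)) := by
      have : ContinuousAt (gop g ∘ (fun b : S => (b : SD S))) a := hg.continuousAt
      exact OnePoint.isOpenEmbedding_coe.continuousAt_iff.1 this
    rw [← ha] at hxs ⊢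
    exact (hca.tendsto).comp hxs

lemma mem_emb_of_lt_tauU {x : ℝ≥0 → SD S} {U : Set S} {s : ℝ≥0}
    (h : (s : ℝ≥0∞) < tauU U x) : x s ∈ emb U := by
  by_contra hmem
  have hle : tauU U x ≤ (s : ℝ≥0∞) :=
    le_trans (min_le_right _ _) (sInf_le ⟨s, rfl, Or.inr hmem⟩)
  exact absurd h hle.not_gt

lemma ae_mem_emb {x : ℝ≥0 → SD S} {U : Set S} {t : ℝ≥0} :
    ∀ᵐ s ∂(volume.restrict (Set.Ioc (0:ℝ) (min (t:ℝ≥0∞) (tauU U x)).toReal)),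
      x (Real.toNNReal s) ∈ emb U := by
  set τ := tauU U x with hτ
  set T := (min (t:ℝ≥0∞) τ).toReal with hT
  have h1 : ∀ᵐ s ∂(volume.restrict (Set.Ioc (0:ℝ) T)), s ∈ Set.Ioc (0:ℝ) T :=
    ae_restrict_mem measurableSet_Ioc
  have h2 : ∀ᵐ s ∂(volume.restrict (Set.Ioc (0:ℝ) T)), s ≠ τ.toReal := by
    refine ae_iff.2 ?_
    have heq : {s : ℝ | ¬ s ≠ τ.toReal} = {τ.toReal} := by ext s; simp
    rw [heq, Measure.restrict_apply (measurableSet_singleton _)]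
    exact measure_mono_null Set.inter_subset_left Real.volume_singleton
  filter_upwards [h1, h2] with s hs hne
  apply mem_emb_of_lt_tauU
  rw [← hτ]
  by_contra hge
  push_neg at hge
  have hτ_ne : τ ≠ ∞ := (hge.trans_lt ENNReal.coe_lt_top).ne
  apply hne
  apply le_antisymm
  · calc s ≤ T := hs.2
    _ ≤ τ.toReal := ENNReal.toReal_mono hτ_ne (min_le_right _ _)
  · calc τ.toReal ≤ ((Real.toNNReal s : ℝ≥0∞)).toReal := ENNReal.toReal_mono ENNReal.coe_ne_top hge
    _ = s := by simp [Real.coe_toNNReal s hs.1.le]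

lemma integrable_gop {g : S → ℝ} (hg : Continuous g) {x : ℝ≥0 → SD S} (hx : x ∈ DlocSet)
    {U : Set S} {C : ℝ} (hC : ∀ a ∈ closure U, |g a| ≤ C) (t : ℝ≥0) :
    Integrable (fun s : ℝ => gop g (x (Real.toNNReal s)))
      (volume.restrict (Set.Ioc (0:ℝ) (min (t:ℝ≥0∞) (tauU U x)).toReal)) := by
  have hmeas : Measurable fun s : ℝ => gop g (x (Real.toNNReal s)) :=
    (measurable_gop_comp hg hx).comp measurable_real_toNNReal
  refine Integrable.mono' (integrable_const C) hmeas.aestronglyMeasurable ?_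
  filter_upwards [ae_mem_emb (x := x) (U := U) (t := t)] with s hs
  obtain ⟨a, ha, hxa⟩ := hs
  rw [← hxa]
  simpa [Real.norm_eq_abs] using hC a (subset_closure ha)

lemma abs_setIntegral_le {F : ℝ → ℝ} {C : ℝ} {T : ℝ} (hT : 0 ≤ T)
    (h : ∀ᵐ s ∂(volume.restrict (Set.Ioc (0:ℝ) T)), ‖F s‖ ≤ C) :
    |∫ s in Set.Ioc (0:ℝ) T, F s| ≤ C * T := by
  have h2 := norm_integral_le_of_norm_le_const h
  rw [measureReal_restrict_apply_univ, measureReal_def, Real.volume_Ioc, sub_zero, ENNReal.toReal_ofReal hT] at h2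
  rwa [Real.norm_eq_abs] at h2


set_option linter.unusedSectionVars false

lemma martProc_zero' (U : Set S) (t : ℝ≥0) (x : Dloc S) :
    martProc (fun _ : S => (0:ℝ)) (fun _ : S => (0:ℝ)) U t x = 0 := by
  unfold martProc
  simp [gop_zero]

lemma martProc_sub_bound (f f' : C₀(S, ℝ)) (g g' : C(S, ℝ)) {U : Set S} (hU : OpenCpt S U)
    {C : ℝ} (hC : 0 ≤ C) (hgg' : ∀ a ∈ closure U, |g a - g' a| ≤ C) (t : ℝ≥0) (x : Dloc S) :
    |martProc ⇑f ⇑g U t x - martProc ⇑f' ⇑g' U t x| ≤ ‖f - f'‖ + C * (t : ℝ) := by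
  set T := (min (t:ℝ≥0∞) (tauU U x.1)).toReal with hT
  have hT0 : (0:ℝ) ≤ T := ENNReal.toReal_nonneg
  have hTt : T ≤ (t : ℝ) := by
    rw [hT]
    calc (min (t:ℝ≥0∞) (tauU U x.1)).toReal ≤ ((t:ℝ≥0∞)).toReal :=
          ENNReal.toReal_mono ENNReal.coe_ne_top (min_le_left _ _)
      _ = (t:ℝ) := by simp
  obtain ⟨Cg, hCg⟩ := hU.2.exists_bound_of_continuousOn g.continuous.continuousOn
  obtain ⟨Cg', hCg'⟩ := hU.2.exists_bound_of_continuousOn g'.continuous.continuousOn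
  have hint := integrable_gop g.continuous x.2 (U := U)
    (C := Cg) (fun a ha => by simpa [Real.norm_eq_abs] using hCg a ha) t
  have hint' := integrable_gop g'.continuous x.2 (U := U)
    (C := Cg') (fun a ha => by simpa [Real.norm_eq_abs] using hCg' a ha) t
  unfold martProc
  rw [← hT]
  set A := gop ⇑f (evalAtE x.1 (min (↑t) (tauU U x.1))) with hA
  set A' := gop ⇑f' (evalAtE x.1 (min (↑t) (tauU U x.1))) with hA'
  set I := ∫ s in Set.Ioc (0:ℝ) T, gop ⇑g (x.1 (Real.toNNReal s)) with hI
  set I' := ∫ s in Set.Ioc (0:ℝ) T, gop ⇑g' (x.1 (Real.toNNReal s)) with hI'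
  have key1 : |A - A'| ≤ ‖f - f'‖ := by
    rw [hA, hA']
    refine abs_gop_sub_le' (norm_nonneg _) (fun a => ?_) _
    simpa using C0_abs_le (f - f') a
  have key2 : |I - I'| ≤ C * T := by
    rw [hI, hI', ← integral_sub hint hint']
    refine abs_setIntegral_le hT0 ?_
    filter_upwards [ae_mem_emb (x := x.1) (U := U) (t := t)] with s hs
    obtain ⟨a, ha, hxa⟩ := hs
    rw [← hxa]
    simpa [Real.norm_eq_abs] using hgg' a (subset_closure ha)
  have hCT : C * T ≤ C * (t:ℝ) := mul_le_mul_of_nonneg_left hTt hC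
  have hrw : A - I - (A' - I') = (A - A') - (I - I') := by ring
  rw [hrw]
  calc |(A - A') - (I - I')| ≤ |A - A'| + |I - I'| := abs_sub _ _
    _ ≤ ‖f - f'‖ + C * (t:ℝ) := by linarith

lemma martProc_bound (f : C₀(S, ℝ)) (g : C(S, ℝ)) {U : Set S} (hU : OpenCpt S U)
    {C : ℝ} (hC : 0 ≤ C) (hg : ∀ a ∈ closure U, |g a| ≤ C) (t : ℝ≥0) (x : Dloc S) :
    |martProc ⇑f ⇑g U t x| ≤ ‖f‖ + C * (t:ℝ) := by
  have h := martProc_sub_bound f 0 g 0 hU hC (by simpa using hg) t x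
  have h0 : martProc ⇑(0 : C₀(S, ℝ)) ⇑(0 : C(S, ℝ)) U t x = 0 := by
    exact martProc_zero' U t x
  rw [h0, sub_zero, sub_zero] at h
  exact h

lemma martProc_add (f f' : C₀(S, ℝ)) (g g' : C(S, ℝ)) {U : Set S} (hU : OpenCpt S U)
    (t : ℝ≥0) (x : Dloc S) :
    martProc (⇑f + ⇑f') (⇑g + ⇑g') U t x = martProc ⇑f ⇑g U t x + martProc ⇑f' ⇑g' U t x := by
  obtain ⟨Cg, hCg⟩ := hU.2.exists_bound_of_continuousOn g.continuous.continuousOn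
  obtain ⟨Cg', hCg'⟩ := hU.2.exists_bound_of_continuousOn g'.continuous.continuousOn
  have hint := integrable_gop g.continuous x.2 (U := U)
    (C := Cg) (fun a ha => by simpa [Real.norm_eq_abs] using hCg a ha) t
  have hint' := integrable_gop g'.continuous x.2 (U := U)
    (C := Cg') (fun a ha => by simpa [Real.norm_eq_abs] using hCg' a ha) t
  unfold martProc
  simp only [gop_add]
  rw [integral_add hint hint']
  ring

lemma martProc_smul (c : ℝ) (f : C₀(S, ℝ)) (g : C(S, ℝ)) (U : Set S) (t : ℝ≥0) (x : Dloc S) :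
    martProc (c • ⇑f) (c • ⇑g) U t x = c * martProc ⇑f ⇑g U t x := by
  unfold martProc
  simp only [gop_smul]
  rw [MeasureTheory.integral_const_mul]
  ring

/-- The martingale local problem property for a single pair. -/
def MartFG (P : Measure (Dloc S)) (fg : C₀(S, ℝ) × C(S, ℝ)) : Prop :=
  ∀ U : Set S, OpenCpt S U →
    Martingale (fun t => martProc (fg.1 : S → ℝ) (fg.2 : S → ℝ) U t) (canFilt S) P

lemma martFG_span {L : Set (C₀(S, ℝ) × C(S, ℝ))} {P : Measure (Dloc S)}
    (hL : ∀ fg ∈ L, MartFG P fg) {fg : C₀(S, ℝ) × C(S, ℝ)}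
    (hfg : fg ∈ Submodule.span ℝ L) : MartFG P fg := by
  induction hfg using Submodule.span_induction with
  | mem p hp => exact hL p hp
  | zero =>
    intro U hU
    have heq : (fun t => martProc (⇑(0 : C₀(S, ℝ) × C(S, ℝ)).1) (⇑(0 : C₀(S, ℝ) × C(S, ℝ)).2) U t)
        = (0 : ℝ≥0 → Dloc S → ℝ) := by
      funext t x
      have h1 : ⇑(0 : C₀(S, ℝ) × C(S, ℝ)).1 = (fun _ : S => (0:ℝ)) := rfl
      have h2 : ⇑(0 : C₀(S, ℝ) × C(S, ℝ)).2 = (fun _ : S => (0:ℝ)) := rfl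
      rw [h1, h2]
      simpa using martProc_zero' U t x
    rw [heq]
    exact martingale_zero _ _ _
  | add p q hp hq ihp ihq =>
    intro U hU
    have heq : (fun t => martProc (⇑(p + q).1) (⇑(p + q).2) U t)
        = (fun t => martProc (⇑p.1) (⇑p.2) U t) + (fun t => martProc (⇑q.1) (⇑q.2) U t) := by
      funext t x
      have h1 : ⇑(p + q).1 = ⇑p.1 + ⇑q.1 := by simp [Prod.fst_add]
      have h2 : ⇑(p + q).2 = ⇑p.2 + ⇑q.2 := by simp [Prod.snd_add]
      rw [h1, h2]
      exact martProc_add p.1 q.1 p.2 q.2 hU t x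
    rw [heq]
    exact (ihp U hU).add (ihq U hU)
  | smul c p hp ihp =>
    intro U hU
    have heq : (fun t => martProc (⇑(c • p).1) (⇑(c • p).2) U t)
        = c • (fun t => martProc (⇑p.1) (⇑p.2) U t) := by
      funext t x
      have h1 : ⇑(c • p).1 = c • ⇑p.1 := by simp [Prod.smul_fst]
      have h2 : ⇑(c • p).2 = c • ⇑p.2 := by simp [Prod.smul_snd]
      rw [h1, h2]
      simpa using martProc_smul c p.1 p.2 U t x
    rw [heq]
    exact (ihp U hU).smul c

lemma martFG_closed {P : Measure (Dloc S)} [IsProbabilityMeasure P]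
    {F : ℕ → C₀(S, ℝ) × C(S, ℝ)} {fg : C₀(S, ℝ) × C(S, ℝ)}
    (hF : ∀ n, MartFG P (F n)) (hconv : Tendsto F atTop (𝓝 fg)) : MartFG P fg := by
  intro U hU
  have h1 : Tendsto (fun n => (F n).1) atTop (𝓝 fg.1) := (continuous_fst.tendsto fg).comp hconv
  have h2 : Tendsto (fun n => (F n).2) atTop (𝓝 fg.2) := (continuous_snd.tendsto fg).comp hconv
  have d1 : Tendsto (fun n => ‖(F n).1 - fg.1‖) atTop (𝓝 0) :=
    tendsto_iff_norm_sub_tendsto_zero.1 h1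
  have hu : ∀ ε : ℝ, 0 < ε →
      ∀ᶠ n in atTop, ∀ a ∈ closure U, dist (fg.2 a) ((F n).2 a) < ε := by
    have := (ContinuousMap.tendsto_iff_forall_isCompact_tendstoUniformlyOn.1 h2) _ hU.2
    exact fun ε hε => (Metric.tendstoUniformlyOn_iff.1 this) ε hε
  -- pointwise convergence
  have hpt : ∀ (t : ℝ≥0) (x : Dloc S),
      Tendsto (fun n => martProc ⇑(F n).1 ⇑(F n).2 U t x) atTop
        (𝓝 (martProc ⇑fg.1 ⇑fg.2 U t x)) := by
    intro t x
    rw [Metric.tendsto_atTop]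
    intro ε hε
    have hεpos : (0:ℝ) < ε / (2 * ((t:ℝ) + 1)) := by positivity
    have ev1 := hu _ hεpos
    have ev2 : ∀ᶠ n in atTop, ‖(F n).1 - fg.1‖ < ε / 2 :=
      d1.eventually_lt_const (by positivity)
    rw [← eventually_atTop]
    filter_upwards [ev1, ev2] with n hn1 hn2
    have hb := martProc_sub_bound (F n).1 fg.1 (F n).2 fg.2 hU hεpos.le
      (fun a ha => by
        have := hn1 a ha
        rw [Real.dist_eq, abs_sub_comm] at this
        exact this.le) t x
    have hmul : ε / (2 * ((t:ℝ) + 1)) * (t:ℝ) ≤ ε / 2 := by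
      rw [div_mul_eq_mul_div, div_le_div_iff₀ (by positivity) (by positivity)]
      nlinarith [t.coe_nonneg, hε.le]
    rw [Real.dist_eq]
    calc |martProc ⇑(F n).1 ⇑(F n).2 U t x - martProc ⇑fg.1 ⇑fg.2 U t x|
        ≤ ‖(F n).1 - fg.1‖ + ε / (2 * ((t:ℝ) + 1)) * (t:ℝ) := hb
      _ < ε / 2 + ε / 2 := by linarith
      _ = ε := by ring
  -- adaptedness of the limit
  have hadp : StronglyAdapted (canFilt S) (fun t => martProc ⇑fg.1 ⇑fg.2 U t) := by
    intro t
    refine stronglyMeasurable_of_tendsto atTop (fun n => (hF n U hU).stronglyAdapted t) ?_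
    rw [tendsto_pi_nhds]
    exact fun x => hpt t x
  refine ⟨hadp, fun i j hij => ?_⟩
  -- uniform-in-n bounds for a tail of the sequence
  have hcb : ∀ᶠ n in atTop,
      (∀ a ∈ closure U, dist (fg.2 a) ((F n).2 a) < 1) ∧ ‖(F n).1 - fg.1‖ < 1 :=
    (hu 1 one_pos).and (d1.eventually_lt_const one_pos)
  obtain ⟨N, hN⟩ := eventually_atTop.1 hcb
  obtain ⟨Cg, hCg⟩ := hU.2.exists_bound_of_continuousOn fg.2.continuous.continuousOn
  set D : ℝ := max Cg 0 + 1 with hD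
  have hD0 : (0:ℝ) ≤ D := by positivity
  have hgl : ∀ a ∈ closure U, |fg.2 a| ≤ D := by
    intro a ha
    have := hCg a ha
    rw [Real.norm_eq_abs] at this
    calc |fg.2 a| ≤ Cg := this
      _ ≤ D := by rw [hD]; nlinarith [le_max_left Cg (0:ℝ)]
  have hgb : ∀ n, ∀ a ∈ closure U, |(F (n + N)).2 a| ≤ D := by
    intro n a ha
    have hd := (hN (n + N) (Nat.le_add_left N n)).1 a ha
    rw [Real.dist_eq] at hd
    have h0 := hCg a ha
    rw [Real.norm_eq_abs] at h0
    have : |(F (n + N)).2 a| ≤ |fg.2 a| + |fg.2 a - (F (n + N)).2 a| := by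
      have := abs_sub_abs_le_abs_sub ((F (n + N)).2 a) (fg.2 a)
      rw [abs_sub_comm] at this
      linarith
    rw [hD]
    nlinarith [le_max_left Cg (0:ℝ)]
  have hfb : ∀ n, ‖(F (n + N)).1‖ ≤ ‖fg.1‖ + 1 := by
    intro n
    have hd := (hN (n + N) (Nat.le_add_left N n)).2
    have := norm_sub_norm_le ((F (n + N)).1) fg.1
    linarith
  set Mn : ℕ → ℝ≥0 → Dloc S → ℝ := fun n t => martProc ⇑(F (n + N)).1 ⇑(F (n + N)).2 U t
    with hMn
  set Ml : ℝ≥0 → Dloc S → ℝ := fun t => martProc ⇑fg.1 ⇑fg.2 U t with hMl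
  have hMn_bdd : ∀ n (t : ℝ≥0) x, ‖Mn n t x‖ ≤ (‖fg.1‖ + 1) + D * (t:ℝ) := by
    intro n t x
    rw [Real.norm_eq_abs]
    calc |Mn n t x| ≤ ‖(F (n + N)).1‖ + D * (t:ℝ) := martProc_bound _ _ hU hD0 (hgb n) t x
      _ ≤ (‖fg.1‖ + 1) + D * (t:ℝ) := by linarith [hfb n]
  have hMl_bdd : ∀ (t : ℝ≥0) x, ‖Ml t x‖ ≤ (‖fg.1‖ + 1) + D * (t:ℝ) := by
    intro t x
    rw [Real.norm_eq_abs]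
    calc |Ml t x| ≤ ‖fg.1‖ + D * (t:ℝ) := martProc_bound _ _ hU hD0 hgl t x
      _ ≤ _ := by linarith
  have hint : ∀ n (t : ℝ≥0), Integrable (Mn n t) P := by
    intro n t
    refine Integrable.mono' (integrable_const ((‖fg.1‖ + 1) + D * (t:ℝ)))
      ((((hF (n + N) U hU).stronglyAdapted t).mono ((canFilt S).le t)).aestronglyMeasurable)
      (Eventually.of_forall fun x => hMn_bdd n t x)
  have hintl : ∀ (t : ℝ≥0), Integrable (Ml t) P := by
    intro t
    refine Integrable.mono' (integrable_const ((‖fg.1‖ + 1) + D * (t:ℝ)))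
      (((hadp t).mono ((canFilt S).le t)).aestronglyMeasurable)
      (Eventually.of_forall fun x => hMl_bdd t x)
  have hcond : ∀ n, P[Mn n j | canFilt S i] =ᵐ[P] P[Mn n i | canFilt S i] := by
    intro n
    refine ((hF (n + N) U hU).2 i j hij).trans ?_
    rw [condExp_of_stronglyMeasurable ((canFilt S).le i) ((hF (n + N) U hU).stronglyAdapted i)
      (hint n i)]
  have hkey : P[Ml j | canFilt S i] =ᵐ[P] P[Ml i | canFilt S i] :=
    tendsto_condExp_unique (fun n => Mn n j) (fun n => Mn n i) (Ml j) (Ml i)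
      (fun n => hint n j) (fun n => hint n i)
      (Eventually.of_forall fun x => (hpt j x).comp (tendsto_add_atTop_nat N))
      (Eventually.of_forall fun x => (hpt i x).comp (tendsto_add_atTop_nat N))
      (fun _ => (‖fg.1‖ + 1) + D * (j:ℝ)) (integrable_const _)
      (fun _ => (‖fg.1‖ + 1) + D * (i:ℝ)) (integrable_const _)
      (fun n => Eventually.of_forall (hMn_bdd n j))
      (fun n => Eventually.of_forall (hMn_bdd n i)) hcond
  refine hkey.trans ?_
  rw [condExp_of_stronglyMeasurable ((canFilt S).le i) (hadp i) (hintl i)]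

end Stmt1Aux

set_option synthInstance.maxHeartbeats 1000000 in
private lemma frechetUrysohn_prod :
    FrechetUrysohnSpace (C₀(S, ℝ) × C(S, ℝ)) := by
  have h1 : TopologicalSpace.MetrizableSpace C(S, ℝ) := inferInstance
  have h2 : FirstCountableTopology C(S, ℝ) := inferInstance
  have h3 : FirstCountableTopology (C₀(S, ℝ) × C(S, ℝ)) := inferInstance
  infer_instance

/-- closure property. For any `L ⊆ C₀(S) × C(S)`, the set of solutions of
the martingale local problem is unchanged by taking the closed linear span:
`M(closure(span L)) = M(L)`. -/
theorem stmt1 (L : Set (C₀(S, ℝ) × C(S, ℝ))) :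
    MartSet (closure (Submodule.span ℝ L : Set (C₀(S, ℝ) × C(S, ℝ)))) = MartSet L := by
  ext P
  simp only [MartSet, Set.mem_setOf_eq]
  constructor
  · rintro ⟨hP, h⟩
    exact ⟨hP, fun fg hfg U hU =>
      h fg (subset_closure (Submodule.subset_span hfg)) U hU⟩
  · rintro ⟨hP, h⟩
    refine ⟨hP, fun fg hfg => ?_⟩
    haveI := hP
    haveI := frechetUrysohn_prod (S := S)
    have hL : ∀ p ∈ L, MartFG P p := fun p hp => h p hp
    obtain ⟨F, hFmem, hFconv⟩ := mem_closure_iff_seq_limit.1 hfg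
    exact martFG_closed (fun n => martFG_span hL (hFmem n)) hFconv

end LocFeller
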